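/- Let G = A ∗_Λ B be an amalgamated free product with Λ a proper subgroup of both A and B, and let X be the set of elements of G whose normal form a₁b₁⋯aₙbₙλ has a₁ non-trivial. Suppose λ₀ ∈ G satisfies λ₀X ⊊ X. Then the normal form of λ₀ begins with a non-trivial element of T∖{e} (i.e. λ₀ ∈ X) and ends with a non-trivial element of T′∖{e} (i.e. bₙ is non-trivial in its normal form), and for every g ∈ G there exists N such that λ₀ⁿ g ∈ X for all n ≥ N. -/

import Mathlib

/-!
Statement 13: for `G = A ∗_Λ B` with `Λ` proper in `A` and `B`, `X` the set of elements
whose normal form has `a₁` non-trivial, and `λ₀ ∈ G` with `λ₀X ⊊ X`: the normal form of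
`λ₀` begins with a non-trivial element of `T∖{e}` (so `λ₀ ∈ X`) and ends with a
non-trivial element of `T′∖{e}`, and for every `g ∈ G` there is `N` with `λ₀ⁿg ∈ X` for
all `n ≥ N`.
-/

open scoped Pointwise symmDiff

/-- `T` is a right transversal for `Λ` in `A` containing `1`: `T ⊆ A`, `1 ∈ T`, and each
coset `aΛ` (`a ∈ A`) contains exactly one element of `T`. -/
def IsRightTransversalOf {G : Type*} [Group G] (Lam A : Subgroup G) (T : Set G) : Prop :=
  T ⊆ (A : Set G) ∧ (1 : G) ∈ T ∧ ∀ a ∈ A, ∃! t, t ∈ T ∧ t⁻¹ * a ∈ Lam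

/-- `l` is a normal word with respect to the transversals `T` (for `Λ` in `A`) and `T'`
(for `Λ` in `B`): a list of non-identity letters alternating between `T` and `T'`.
Such a list, followed by an element `λ ∈ Λ`, is the normal form `a₁b₁⋯aₙbₙλ` (where `a₁`,
resp. `bₙ`, may be trivial, i.e. absent). -/
def IsNormalWord {G : Type*} [Group G] (T T' : Set G) (l : List G) : Prop :=
  (∀ x ∈ l, x ≠ 1 ∧ (x ∈ T ∨ x ∈ T')) ∧
    l.Chain' fun x y => (x ∈ T ∧ y ∈ T') ∨ (x ∈ T' ∧ y ∈ T)

/-- Every element of `G` is expressible uniquely in the normal form `a₁b₁⋯aₙbₙλ`.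
Together with `IsRightTransversalOf` hypotheses and `Λ = A ⊓ B`, this encodes that `G` is
the amalgamated free product `A ∗_Λ B`. -/
def HasUniqueNormalForms {G : Type*} [Group G] (Lam : Subgroup G) (T T' : Set G) : Prop :=
  ∀ g : G, ∃! p : List G × G,
    IsNormalWord T T' p.1 ∧ p.2 ∈ Lam ∧ g = p.1.prod * p.2

/-- The set `X` of elements of `G` whose normal form `a₁b₁⋯aₙbₙλ` has `a₁` non-trivial,
i.e. whose normal word is nonempty and begins with a letter of `T`. -/
def amalgX {G : Type*} [Group G] (Lam : Subgroup G) (T T' : Set G) : Set G :=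
  {g : G | ∃ (l : List G) (lam : G), IsNormalWord T T' l ∧ lam ∈ Lam ∧
    g = l.prod * lam ∧ ∃ x, l.head? = some x ∧ x ∈ T}

/-- The image of a subset `X ⊆ G` in the set `H\G` of right cosets `Hg`
(the quotient of `G` by the left multiplication action of `H`). -/
def rproj {G : Type*} [Group G] (H : Subgroup G) (X : Set G) :
    Set (Quotient (QuotientGroup.rightRel H)) :=
  Quotient.mk (QuotientGroup.rightRel H) '' X

/-- Two sets are almost equal if their symmetric difference is finite. -/
def AlmostEqSets {α : Type*} (A B : Set α) : Prop :=
  (A ∆ B).Finite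

/-- `X ⊆ G` is `H`-almost invariant: `hX = X` for all `h ∈ H`, and for every `g ∈ G`
the sets `(H\X)g` and `H\X` are almost equal. -/
def IsAlmostInvariant {G : Type*} [Group G] (H : Subgroup G) (X : Set G) : Prop :=
  (∀ h ∈ H, h • X = X) ∧
    ∀ g : G, AlmostEqSets (rproj H ((fun x => x * g) '' X)) (rproj H X)

set_option linter.unusedSectionVars false
set_option linter.unusedVariables false
set_option maxHeartbeats 1000000

namespace AmalgAux

variable {G : Type*} [Group G] {A B Lam : Subgroup G} {T T' : Set G}

/-- relation matched by the "push" operation: types of letters are preserved -/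
def NRel (T T' : Set G) (x y : G) : Prop := (x ∈ T ∧ y ∈ T) ∨ (x ∈ T' ∧ y ∈ T')

lemma eq_one_of_mem_T_of_mem_Lam (hT : IsRightTransversalOf Lam A T)
    {x : G} (hx : x ∈ T) (hxL : x ∈ Lam) : x = 1 := by
  obtain ⟨t, _, huniq⟩ := hT.2.2 x (hT.1 hx)
  have h1 : x = t := huniq x ⟨hx, by simpa using Lam.one_mem⟩
  have h2 : (1 : G) = t := huniq 1 ⟨hT.2.1, by simpa using hxL⟩
  rw [h1, ← h2]

lemma not_mem_Lam_of_mem_T (hT : IsRightTransversalOf Lam A T)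
    {x : G} (hx : x ∈ T) (hne : x ≠ 1) : x ∉ Lam :=
  fun h => hne (eq_one_of_mem_T_of_mem_Lam hT hx h)

lemma rep_exists (hT : IsRightTransversalOf Lam A T) {a : G} (ha : a ∈ A) :
    ∃ t ν, t ∈ T ∧ ν ∈ Lam ∧ a = t * ν ∧ (a ∉ Lam → t ≠ 1) := by
  obtain ⟨t, ⟨htT, htL⟩, _⟩ := hT.2.2 a ha
  refine ⟨t, t⁻¹ * a, htT, htL, by group, ?_⟩
  rintro haL rfl
  simp only [inv_one, one_mul] at htL
  exact haL htL

lemma not_mem_T'_of_mem_T (hAB : Lam = A ⊓ B) (hT : IsRightTransversalOf Lam A T)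
    (hT' : IsRightTransversalOf Lam B T') {x : G} (hx : x ∈ T) (hne : x ≠ 1) : x ∉ T' := by
  intro hx'
  have hm : x ∈ Lam := by
    rw [hAB]; exact Subgroup.mem_inf.mpr ⟨hT.1 hx, hT'.1 hx'⟩
  exact hne (eq_one_of_mem_T_of_mem_Lam hT hx hm)

lemma not_mem_T_of_mem_T' (hAB : Lam = A ⊓ B) (hT : IsRightTransversalOf Lam A T)
    (hT' : IsRightTransversalOf Lam B T') {x : G} (hx : x ∈ T') (hne : x ≠ 1) : x ∉ T := by
  intro hx'
  have hm : x ∈ Lam := by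
    rw [hAB]; exact Subgroup.mem_inf.mpr ⟨hT.1 hx', hT'.1 hx⟩
  exact hne (eq_one_of_mem_T_of_mem_Lam hT hx' hm)

lemma nw_nil : IsNormalWord T T' ([] : List G) := ⟨by simp, List.isChain_nil⟩

lemma nw_tail {x : G} {l : List G} (h : IsNormalWord T T' (x :: l)) : IsNormalWord T T' l :=
  ⟨fun y hy => h.1 y (List.mem_cons_of_mem x hy), (List.isChain_cons.mp h.2).2⟩

lemma nw_append_left {l₁ l₂ : List G} (h : IsNormalWord T T' (l₁ ++ l₂)) :
    IsNormalWord T T' l₁ :=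
  ⟨fun y hy => h.1 y (List.mem_append_left _ hy), (List.isChain_append.mp h.2).1⟩

lemma nw_append_right {l₁ l₂ : List G} (h : IsNormalWord T T' (l₁ ++ l₂)) :
    IsNormalWord T T' l₂ :=
  ⟨fun y hy => h.1 y (List.mem_append_right _ hy), (List.isChain_append.mp h.2).2.1⟩

lemma forall₂_head_some {R : G → G → Prop} {l₁ l₂ : List G} (h : List.Forall₂ R l₁ l₂)
    {x : G} (hx : l₁.head? = some x) : ∃ y, l₂.head? = some y ∧ R x y := by
  cases h with
  | nil => simp at hx
  | cons hr ht =>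
    simp only [List.head?_cons, Option.some_inj] at hx
    exact ⟨_, rfl, hx ▸ hr⟩

lemma forall₂_head_some' {R : G → G → Prop} {l₁ l₂ : List G} (h : List.Forall₂ R l₁ l₂)
    {y : G} (hy : l₂.head? = some y) : ∃ x, l₁.head? = some x ∧ R x y := by
  cases h with
  | nil => simp at hy
  | cons hr ht =>
    simp only [List.head?_cons, Option.some_inj] at hy
    exact ⟨_, rfl, hy ▸ hr⟩

lemma forall₂_getLast_some {R : G → G → Prop} {l₁ l₂ : List G} (h : List.Forall₂ R l₁ l₂)
    {x : G} (hx : l₁.getLast? = some x) : ∃ y, l₂.getLast? = some y ∧ R x y := by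
  have h' : List.Forall₂ R l₁.reverse l₂.reverse := List.forall₂_reverse_iff.mpr h
  rw [← List.head?_reverse] at hx
  obtain ⟨y, hy, hr⟩ := forall₂_head_some h' hx
  exact ⟨y, by rwa [List.head?_reverse] at hy, hr⟩

lemma push (hAB : Lam = A ⊓ B) (hT : IsRightTransversalOf Lam A T)
    (hT' : IsRightTransversalOf Lam B T') :
    ∀ (l : List G), IsNormalWord T T' l → ∀ lam ∈ Lam, ∃ l' lam',
      lam' ∈ Lam ∧ lam * l.prod = l'.prod * lam' ∧ IsNormalWord T T' l' ∧
      List.Forall₂ (NRel T T') l l' := by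
  have hLA : Lam ≤ A := hAB ▸ inf_le_left
  have hLB : Lam ≤ B := hAB ▸ inf_le_right
  intro l
  induction l with
  | nil => exact fun _ lam hlam => ⟨[], lam, hlam, by simp, nw_nil, List.Forall₂.nil⟩
  | cons x rest ih =>
    intro hnw lam hlam
    obtain ⟨hx1, hxTT⟩ := hnw.1 x (List.mem_cons_self)
    have hrest : IsNormalWord T T' rest := nw_tail hnw
    rcases hxTT with hxT | hxT'
    · -- x ∈ T
      have hxnL : x ∉ Lam := not_mem_Lam_of_mem_T hT hxT hx1
      have hmem : lam * x ∈ A := A.mul_mem (hLA hlam) (hT.1 hxT)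
      have hmnL : lam * x ∉ Lam := fun h => hxnL (by
        have := Lam.mul_mem (Lam.inv_mem hlam) h
        simpa [mul_assoc] using this)
      obtain ⟨t, ν, htT, hνL, hrep, htne⟩ := rep_exists hT hmem
      have ht1 : t ≠ 1 := htne hmnL
      obtain ⟨rest', ν', hν'L, hpe, hnw', hf⟩ := ih hrest ν hνL
      refine ⟨t :: rest', ν', hν'L, ?_, ?_, List.Forall₂.cons (Or.inl ⟨hxT, htT⟩) hf⟩
      · rw [List.prod_cons, List.prod_cons, ← mul_assoc, hrep, mul_assoc, hpe, ← mul_assoc]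
      · refine ⟨?_, ?_⟩
        · intro y hy
          rcases List.mem_cons.mp hy with rfl | hy'
          · exact ⟨ht1, Or.inl htT⟩
          · exact hnw'.1 y hy' 
        · show List.IsChain _ _; rw [List.isChain_cons]
          refine ⟨?_, hnw'.2⟩
          intro y hy
          obtain ⟨r, hr, hRr⟩ := forall₂_head_some' hf hy
          -- chain of x :: rest relates x and r
          have hchain := (List.isChain_cons.mp hnw.2).1 r hr
          have hrT' : r ∈ T' := by
            rcases hchain with ⟨_, h⟩ | ⟨hx', _⟩
            · exact h
            · exact absurd hx' (not_mem_T'_of_mem_T hAB hT hT' hxT hx1)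
          have hr1 : r ≠ 1 := by
            have : r ∈ rest := by
              cases rest with
              | nil => simp at hr
              | cons a l => simp only [List.head?_cons, Option.some_inj] at hr; exact hr ▸ List.mem_cons_self
            exact (hrest.1 r this).1
          have hyT' : y ∈ T' := by
            rcases hRr with ⟨hrT, _⟩ | ⟨_, h⟩
            · exact absurd hrT (not_mem_T_of_mem_T' hAB hT hT' hrT' hr1)
            · exact h
          exact Or.inl ⟨htT, hyT'⟩
    · -- x ∈ T'
      have hxnL : x ∉ Lam := not_mem_Lam_of_mem_T hT' hxT' hx1
      have hmem : lam * x ∈ B := B.mul_mem (hLB hlam) (hT'.1 hxT')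
      have hmnL : lam * x ∉ Lam := fun h => hxnL (by
        have := Lam.mul_mem (Lam.inv_mem hlam) h
        simpa [mul_assoc] using this)
      obtain ⟨t, ν, htT', hνL, hrep, htne⟩ := rep_exists hT' hmem
      have ht1 : t ≠ 1 := htne hmnL
      obtain ⟨rest', ν', hν'L, hpe, hnw', hf⟩ := ih hrest ν hνL
      refine ⟨t :: rest', ν', hν'L, ?_, ?_, List.Forall₂.cons (Or.inr ⟨hxT', htT'⟩) hf⟩
      · rw [List.prod_cons, List.prod_cons, ← mul_assoc, hrep, mul_assoc, hpe, ← mul_assoc]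
      · refine ⟨?_, ?_⟩
        · intro y hy
          rcases List.mem_cons.mp hy with rfl | hy'
          · exact ⟨ht1, Or.inr htT'⟩
          · exact hnw'.1 y hy' 
        · show List.IsChain _ _; rw [List.isChain_cons]
          refine ⟨?_, hnw'.2⟩
          intro y hy
          obtain ⟨r, hr, hRr⟩ := forall₂_head_some' hf hy
          have hchain := (List.isChain_cons.mp hnw.2).1 r hr
          have hrT : r ∈ T := by
            rcases hchain with ⟨hx', _⟩ | ⟨_, h⟩
            · exact absurd hx' (not_mem_T_of_mem_T' hAB hT hT' hxT' hx1)
            · exact h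
          have hr1 : r ≠ 1 := by
            have : r ∈ rest := by
              cases rest with
              | nil => simp at hr
              | cons a l => simp only [List.head?_cons, Option.some_inj] at hr; exact hr ▸ List.mem_cons_self
            exact (hrest.1 r this).1
          have hyT : y ∈ T := by
            rcases hRr with ⟨_, h⟩ | ⟨hrT', _⟩
            · exact h
            · exact absurd hrT' (not_mem_T'_of_mem_T hAB hT hT' hrT hr1)
          exact Or.inr ⟨htT', hyT⟩

/-- a letter of a normal word is in exactly one of T, T'; helper to transfer
`NRel` + one side's type to the other's -/
lemma nrel_T (hAB : Lam = A ⊓ B) (hT : IsRightTransversalOf Lam A T)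
    (hT' : IsRightTransversalOf Lam B T') {x y : G} (h : NRel T T' x y)
    (hx : x ∈ T) (hx1 : x ≠ 1) : y ∈ T := by
  rcases h with ⟨_, h⟩ | ⟨hx', _⟩
  · exact h
  · exact absurd hx' (not_mem_T'_of_mem_T hAB hT hT' hx hx1)

lemma nrel_T' (hAB : Lam = A ⊓ B) (hT : IsRightTransversalOf Lam A T)
    (hT' : IsRightTransversalOf Lam B T') {x y : G} (h : NRel T T' x y)
    (hx : x ∈ T') (hx1 : x ≠ 1) : y ∈ T' := by
  rcases h with ⟨hx', _⟩ | ⟨_, h⟩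
  · exact absurd hx' (not_mem_T_of_mem_T' hAB hT hT' hx hx1)
  · exact h

lemma head_mem {l : List G} {x : G} (h : l.head? = some x) : x ∈ l := by
  cases l with
  | nil => simp at h
  | cons a l => simp only [List.head?_cons, Option.some_inj] at h; exact h ▸ List.mem_cons_self

lemma getLast_mem {l : List G} {x : G} (h : l.getLast? = some x) : x ∈ l := by
  rw [← List.head?_reverse] at h
  have := head_mem h
  simpa using this

/-- Concatenation with no cancellation at the junction. -/
lemma concat_noclash (hAB : Lam = A ⊓ B) (hT : IsRightTransversalOf Lam A T)
    (hT' : IsRightTransversalOf Lam B T') {l₁ l₂ : List G}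
    (h₁ : IsNormalWord T T' l₁) (h₂ : IsNormalWord T T' l₂) {lam : G} (hlam : lam ∈ Lam)
    (hjun : ∀ u ∈ l₁.getLast?, ∀ v ∈ l₂.head?, (u ∈ T ∧ v ∈ T') ∨ (u ∈ T' ∧ v ∈ T)) :
    ∃ l₂' lam', lam' ∈ Lam ∧ l₁.prod * lam * l₂.prod = (l₁ ++ l₂').prod * lam' ∧
      IsNormalWord T T' (l₁ ++ l₂') ∧ l₂'.length = l₂.length := by
  obtain ⟨l₂', lam', hlam', hpe, hnw', hf⟩ := push hAB hT hT' l₂ h₂ lam hlam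
  refine ⟨l₂', lam', hlam', ?_, ?_, (List.Forall₂.length_eq hf).symm⟩
  · rw [List.prod_append, mul_assoc, hpe, ← mul_assoc]
  · refine ⟨?_, ?_⟩
    · intro y hy
      rcases List.mem_append.mp hy with hy' | hy'
      · exact h₁.1 y hy'
      · exact hnw'.1 y hy'
    · show List.IsChain _ _; rw [List.isChain_append]
      refine ⟨h₁.2, hnw'.2, ?_⟩
      intro u hu w hw
      obtain ⟨v, hv, hRv⟩ := forall₂_head_some' hf hw
      have hjv := hjun u hu v hv
      have hv1 : v ≠ 1 := (h₂.1 v (head_mem hv)).1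
      rcases hjv with ⟨huT, hvT'⟩ | ⟨huT', hvT⟩
      · exact Or.inl ⟨huT, nrel_T' hAB hT hT' hRv hvT' hv1⟩
      · exact Or.inr ⟨huT', nrel_T hAB hT hT' hRv hvT hv1⟩

lemma forall₂_getLast_some' {R : G → G → Prop} {l₁ l₂ : List G} (h : List.Forall₂ R l₁ l₂)
    {y : G} (hy : l₂.getLast? = some y) : ∃ x, l₁.getLast? = some x ∧ R x y := by
  have h' : List.Forall₂ R l₁.reverse l₂.reverse := List.forall₂_reverse_iff.mpr h
  rw [← List.head?_reverse] at hy
  obtain ⟨x, hx, hr⟩ := forall₂_head_some' h' hy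
  exact ⟨x, by rwa [List.head?_reverse] at hx, hr⟩

/-- Normal form of the inverse: `(l.prod * lam)⁻¹` has a normal word whose letters
correspond in type to the reverse of `l`. -/
lemma inv_form (hAB : Lam = A ⊓ B) (hT : IsRightTransversalOf Lam A T)
    (hT' : IsRightTransversalOf Lam B T') :
    ∀ (l : List G), IsNormalWord T T' l → ∀ lam ∈ Lam, ∃ l' lam',
      lam' ∈ Lam ∧ (l.prod * lam)⁻¹ = l'.prod * lam' ∧ IsNormalWord T T' l' ∧
      List.Forall₂ (NRel T T') l.reverse l' := by
  have hLA : Lam ≤ A := hAB ▸ inf_le_left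
  have hLB : Lam ≤ B := hAB ▸ inf_le_right
  intro l
  induction l with
  | nil => exact fun _ lam hlam => ⟨[], lam⁻¹, Lam.inv_mem hlam, by simp, nw_nil, by simp⟩
  | cons x rest ih =>
    intro hnw lam hlam
    obtain ⟨hx1, hxTT⟩ := hnw.1 x (List.mem_cons_self)
    have hrest : IsNormalWord T T' rest := nw_tail hnw
    obtain ⟨l'', lam'', hlam'', hpe, hnw'', hf⟩ := ih hrest lam hlam
    have hbase : ((x :: rest).prod * lam)⁻¹ = l''.prod * (lam'' * x⁻¹) := by
      rw [List.prod_cons, ← mul_assoc, ← hpe]; group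
    -- the last entry of l'' has the type opposite to that of x
    have hjunType : ∀ w ∈ l''.getLast?, (x ∈ T → w ∈ T' ∧ w ≠ 1) ∧ (x ∈ T' → w ∈ T ∧ w ≠ 1) := by
      intro w hw
      obtain ⟨r, hr, hRr⟩ := forall₂_getLast_some' hf hw
      rw [List.getLast?_reverse] at hr
      have hchain := (List.isChain_cons.mp hnw.2).1 r hr
      have hr1 : r ≠ 1 := (hrest.1 r (head_mem hr)).1
      have hw1 : w ≠ 1 := (hnw''.1 w (getLast_mem hw)).1
      constructor
      · intro hxT
        have hrT' : r ∈ T' := by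
          rcases hchain with ⟨_, h⟩ | ⟨hx', _⟩
          · exact h
          · exact absurd hx' (not_mem_T'_of_mem_T hAB hT hT' hxT hx1)
        exact ⟨nrel_T' hAB hT hT' hRr hrT' hr1, hw1⟩
      · intro hxT'
        have hrT : r ∈ T := by
          rcases hchain with ⟨hx', _⟩ | ⟨_, h⟩
          · exact absurd hx' (not_mem_T_of_mem_T' hAB hT hT' hxT' hx1)
          · exact h
        exact ⟨nrel_T hAB hT hT' hRr hrT hr1, hw1⟩
    have hxinL : x⁻¹ ∉ Lam := fun h =>
      (match hxTT with
        | Or.inl hxT => not_mem_Lam_of_mem_T hT hxT hx1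
        | Or.inr hxT' => not_mem_Lam_of_mem_T hT' hxT' hx1) (by simpa using Lam.inv_mem h)
    have hmnL : lam'' * x⁻¹ ∉ Lam := fun h => hxinL (by
      have := Lam.mul_mem (Lam.inv_mem hlam'') h
      simpa [mul_assoc] using this)
    rcases hxTT with hxT | hxT'
    · -- x ∈ T, so x⁻¹ ∈ A and the new letter is in T
      have hmem : lam'' * x⁻¹ ∈ A := A.mul_mem (hLA hlam'') (A.inv_mem (hT.1 hxT))
      obtain ⟨t, ν, htT, hνL, hrep, htne⟩ := rep_exists hT hmem
      have ht1 : t ≠ 1 := htne hmnL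
      refine ⟨l'' ++ [t], ν, hνL, ?_, ?_, ?_⟩
      · rw [hbase, hrep, List.prod_append, List.prod_cons, List.prod_nil, mul_one, mul_assoc]
      · refine ⟨?_, ?_⟩
        · intro y hy
          rcases List.mem_append.mp hy with hy' | hy'
          · exact hnw''.1 y hy'
          · rw [List.mem_singleton] at hy'; exact hy' ▸ ⟨ht1, Or.inl htT⟩
        · show List.IsChain _ _; rw [List.isChain_append]
          refine ⟨hnw''.2, List.isChain_singleton t, ?_⟩
          intro w hw y hy
          simp only [List.head?_cons, Option.mem_def, Option.some_inj] at hy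
          subst hy
          exact Or.inr ⟨((hjunType w hw).1 hxT).1, htT⟩
      · rw [List.reverse_cons]
        exact List.rel_append hf (List.Forall₂.cons (Or.inl ⟨hxT, htT⟩) List.Forall₂.nil)
    · -- x ∈ T'
      have hmem : lam'' * x⁻¹ ∈ B := B.mul_mem (hLB hlam'') (B.inv_mem (hT'.1 hxT'))
      obtain ⟨t, ν, htT', hνL, hrep, htne⟩ := rep_exists hT' hmem
      have ht1 : t ≠ 1 := htne hmnL
      refine ⟨l'' ++ [t], ν, hνL, ?_, ?_, ?_⟩
      · rw [hbase, hrep, List.prod_append, List.prod_cons, List.prod_nil, mul_one, mul_assoc]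
      · refine ⟨?_, ?_⟩
        · intro y hy
          rcases List.mem_append.mp hy with hy' | hy'
          · exact hnw''.1 y hy'
          · rw [List.mem_singleton] at hy'; exact hy' ▸ ⟨ht1, Or.inr htT'⟩
        · show List.IsChain _ _; rw [List.isChain_append]
          refine ⟨hnw''.2, List.isChain_singleton t, ?_⟩
          intro w hw y hy
          simp only [List.head?_cons, Option.mem_def, Option.some_inj] at hy
          subst hy
          exact Or.inl ⟨((hjunType w hw).2 hxT').1, htT'⟩
      · rw [List.reverse_cons]
        exact List.rel_append hf (List.Forall₂.cons (Or.inr ⟨hxT', htT'⟩) List.Forall₂.nil)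

/-- Full reduction lemma: the product `l₁.prod * lam * l₂.prod` has a normal form, and
if `l₂` is shorter than `l₁` then the normal word keeps the head of `l₁`. -/
lemma red (hAB : Lam = A ⊓ B) (hT : IsRightTransversalOf Lam A T)
    (hT' : IsRightTransversalOf Lam B T') :
    ∀ (k : ℕ) (l₁ l₂ : List G) (lam : G), l₁.length ≤ k →
      IsNormalWord T T' l₁ → IsNormalWord T T' l₂ → lam ∈ Lam →
      ∃ l mu, mu ∈ Lam ∧ l₁.prod * lam * l₂.prod = l.prod * mu ∧ IsNormalWord T T' l ∧
        (l₂.length < l₁.length → l.head? = l₁.head?) := by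
  have hLA : Lam ≤ A := hAB ▸ inf_le_left
  have hLB : Lam ≤ B := hAB ▸ inf_le_right
  intro k
  induction k with
  | zero =>
    intro l₁ l₂ lam hlen h₁ h₂ hlam
    have hnil : l₁ = [] := List.length_eq_zero_iff.mp (Nat.le_zero.mp hlen)
    subst hnil
    obtain ⟨l₂p, lam', hlam', hpe, hnwp, _⟩ := push hAB hT hT' l₂ h₂ lam hlam
    exact ⟨l₂p, lam', hlam', by simpa [mul_assoc] using hpe, hnwp, by simp⟩
  | succ k ih =>
    intro l₁ l₂ lam hlen h₁ h₂ hlam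
    rcases List.eq_nil_or_concat l₁ with rfl | ⟨L, u, rfl⟩
    · obtain ⟨l₂p, lam', hlam', hpe, hnwp, _⟩ := push hAB hT hT' l₂ h₂ lam hlam
      exact ⟨l₂p, lam', hlam', by simpa [mul_assoc] using hpe, hnwp, by simp⟩
    simp only [List.concat_eq_append] at *
    rcases l₂ with _ | ⟨v, l₂'⟩
    · exact ⟨L ++ [u], lam, hlam, by simp, h₁, fun _ => rfl⟩
    obtain ⟨hu1, huTT⟩ := h₁.1 u (by simp)
    obtain ⟨hv1, hvTT⟩ := h₂.1 v (List.mem_cons_self)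
    have hnormL : IsNormalWord T T' L := nw_append_left h₁
    have hnorm₂' : IsNormalWord T T' l₂' := nw_tail h₂
    have hjunL : ∀ w ∈ L.getLast?, (w ∈ T ∧ u ∈ T') ∨ (w ∈ T' ∧ u ∈ T) := by
      intro w hw
      exact (List.isChain_append.mp h₁.2).2.2 w hw u rfl
    have hjun₂ : ∀ w ∈ l₂'.head?, (v ∈ T ∧ w ∈ T') ∨ (v ∈ T' ∧ w ∈ T) :=
      (List.isChain_cons.mp h₂.2).1
    have hlenL : L.length ≤ k := by
      simp only [List.length_append, List.length_cons] at hlen ⊢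
      omega
    -- type case analysis
    rcases huTT with huT | huT'
    · rcases hvTT with hvT | hvT'
      · -- clash in A : u ∈ T, v ∈ T
        by_cases hcL : u * lam * v ∈ Lam
        · -- full cancellation of the pair, recurse
          obtain ⟨l, mu, hmu, hrec, hnl, hhead⟩ := ih L l₂' (u * lam * v) hlenL hnormL hnorm₂' hcL
          refine ⟨l, mu, hmu, ?_, hnl, ?_⟩
          · rw [← hrec]
            simp only [List.prod_append, List.prod_cons, List.prod_nil, mul_one, mul_assoc]
          · intro h
            simp only [List.length_append, List.length_cons] at h
            have hlt : l₂'.length < L.length := by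
              simp only [List.length_append, List.length_cons, List.length_nil] at h; omega
            have hL0 : L ≠ [] := by
              intro hLnil; subst hLnil; simp at hlt
            rw [hhead hlt]
            cases L with
            | nil => exact absurd rfl hL0
            | cons a L' => simp
        · -- the pair merges to a non-trivial letter of T
          have hc : u * lam * v ∈ A :=
            A.mul_mem (A.mul_mem (hT.1 huT) (hLA hlam)) (hT.1 hvT)
          obtain ⟨s, ν, hsT, hνL, hrep, hsne⟩ := rep_exists hT hc
          have hs1 : s ≠ 1 := hsne hcL
          obtain ⟨l₂p, νp, hνpL, hpe, hnwp, hfp⟩ := push hAB hT hT' l₂' hnorm₂' ν hνL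
          refine ⟨L ++ s :: l₂p, νp, hνpL, ?_, ?_, ?_⟩
          · have key : u * (lam * (v * l₂'.prod)) = s * (l₂p.prod * νp) := by
              rw [← mul_assoc, ← mul_assoc, hrep, mul_assoc, hpe]
            simp only [List.prod_append, List.prod_cons, List.prod_nil, mul_one, mul_assoc]
            rw [key]
          · refine ⟨?_, ?_⟩
            · intro y hy
              rcases List.mem_append.mp hy with hy' | hy'
              · exact hnormL.1 y hy'
              · rcases List.mem_cons.mp hy' with rfl | hy''
                · exact ⟨hs1, Or.inl hsT⟩
                · exact hnwp.1 y hy''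
            · show List.IsChain _ _; rw [List.isChain_append]
              refine ⟨hnormL.2, ?_, ?_⟩
              · show List.IsChain _ _; rw [List.isChain_cons]
                refine ⟨?_, hnwp.2⟩
                intro y hy
                obtain ⟨w, hw, hRw⟩ := forall₂_head_some' hfp hy
                have hw1 : w ≠ 1 := (hnorm₂'.1 w (head_mem hw)).1
                have hwT' : w ∈ T' := by
                  rcases hjun₂ w hw with ⟨_, h⟩ | ⟨hv', _⟩
                  · exact h
                  · exact absurd hv' (not_mem_T'_of_mem_T hAB hT hT' hvT hv1)
                exact Or.inl ⟨hsT, nrel_T' hAB hT hT' hRw hwT' hw1⟩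
              · intro w hw y hy
                simp only [List.head?_cons, Option.mem_def, Option.some_inj] at hy
                subst hy
                have hwT' : w ∈ T' := by
                  rcases hjunL w hw with ⟨_, hu'⟩ | ⟨h, _⟩
                  · exact absurd hu' (not_mem_T'_of_mem_T hAB hT hT' huT hu1)
                  · exact h
                exact Or.inr ⟨hwT', hsT⟩
          · intro h
            simp only [List.length_append, List.length_cons] at h
            have hL0 : L ≠ [] := by
              intro hLnil
              subst hLnil
              simp only [List.length_append, List.length_cons, List.length_nil] at h
              omega
            cases L with
            | nil => exact absurd rfl hL0
            | cons a L' => simp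
      · -- no clash : u ∈ T, v ∈ T'
        obtain ⟨l₂p, lam', hlam', hpe, hnw', hlenp⟩ :=
          concat_noclash hAB hT hT' h₁ h₂ hlam (by
            intro w hw y hy
            rw [List.getLast?_concat] at hw
            simp only [Option.mem_def, Option.some_inj] at hw hy
            simp only [List.head?_cons, Option.some_inj] at hy
            subst hw
            subst hy
            exact Or.inl ⟨huT, hvT'⟩)
        refine ⟨(L ++ [u]) ++ l₂p, lam', hlam', hpe, hnw', ?_⟩
        intro _
        cases L with
        | nil => simp
        | cons a L' => simp
    · rcases hvTT with hvT | hvT'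
      · -- no clash : u ∈ T', v ∈ T
        obtain ⟨l₂p, lam', hlam', hpe, hnw', hlenp⟩ :=
          concat_noclash hAB hT hT' h₁ h₂ hlam (by
            intro w hw y hy
            rw [List.getLast?_concat] at hw
            simp only [Option.mem_def, Option.some_inj] at hw hy
            simp only [List.head?_cons, Option.some_inj] at hy
            subst hw
            subst hy
            exact Or.inr ⟨huT', hvT⟩)
        refine ⟨(L ++ [u]) ++ l₂p, lam', hlam', hpe, hnw', ?_⟩
        intro _
        cases L with
        | nil => simp
        | cons a L' => simp
      · -- clash in B : u ∈ T', v ∈ T'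
        by_cases hcL : u * lam * v ∈ Lam
        · obtain ⟨l, mu, hmu, hrec, hnl, hhead⟩ := ih L l₂' (u * lam * v) hlenL hnormL hnorm₂' hcL
          refine ⟨l, mu, hmu, ?_, hnl, ?_⟩
          · rw [← hrec]
            simp only [List.prod_append, List.prod_cons, List.prod_nil, mul_one, mul_assoc]
          · intro h
            simp only [List.length_append, List.length_cons] at h
            have hlt : l₂'.length < L.length := by
              simp only [List.length_append, List.length_cons, List.length_nil] at h; omega
            have hL0 : L ≠ [] := by
              intro hLnil; subst hLnil; simp at hlt
            rw [hhead hlt]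
            cases L with
            | nil => exact absurd rfl hL0
            | cons a L' => simp
        · have hc : u * lam * v ∈ B :=
            B.mul_mem (B.mul_mem (hT'.1 huT') (hLB hlam)) (hT'.1 hvT')
          obtain ⟨s, ν, hsT', hνL, hrep, hsne⟩ := rep_exists hT' hc
          have hs1 : s ≠ 1 := hsne hcL
          obtain ⟨l₂p, νp, hνpL, hpe, hnwp, hfp⟩ := push hAB hT hT' l₂' hnorm₂' ν hνL
          refine ⟨L ++ s :: l₂p, νp, hνpL, ?_, ?_, ?_⟩
          · have key : u * (lam * (v * l₂'.prod)) = s * (l₂p.prod * νp) := by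
              rw [← mul_assoc, ← mul_assoc, hrep, mul_assoc, hpe]
            simp only [List.prod_append, List.prod_cons, List.prod_nil, mul_one, mul_assoc]
            rw [key]
          · refine ⟨?_, ?_⟩
            · intro y hy
              rcases List.mem_append.mp hy with hy' | hy'
              · exact hnormL.1 y hy'
              · rcases List.mem_cons.mp hy' with rfl | hy''
                · exact ⟨hs1, Or.inr hsT'⟩
                · exact hnwp.1 y hy''
            · show List.IsChain _ _; rw [List.isChain_append]
              refine ⟨hnormL.2, ?_, ?_⟩
              · show List.IsChain _ _; rw [List.isChain_cons]
                refine ⟨?_, hnwp.2⟩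
                intro y hy
                obtain ⟨w, hw, hRw⟩ := forall₂_head_some' hfp hy
                have hw1 : w ≠ 1 := (hnorm₂'.1 w (head_mem hw)).1
                have hwT : w ∈ T := by
                  rcases hjun₂ w hw with ⟨hv', _⟩ | ⟨_, h⟩
                  · exact absurd hv' (not_mem_T_of_mem_T' hAB hT hT' hvT' hv1)
                  · exact h
                exact Or.inr ⟨hsT', nrel_T hAB hT hT' hRw hwT hw1⟩
              · intro w hw y hy
                simp only [List.head?_cons, Option.mem_def, Option.some_inj] at hy
                subst hy
                have hwT : w ∈ T := by
                  rcases hjunL w hw with ⟨h, _⟩ | ⟨_, hu'⟩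
                  · exact h
                  · exact absurd hu' (not_mem_T_of_mem_T' hAB hT hT' huT' hu1)
                exact Or.inl ⟨hwT, hsT'⟩
          · intro h
            simp only [List.length_append, List.length_cons] at h
            have hL0 : L ≠ [] := by
              intro hLnil
              subst hLnil
              simp only [List.length_append, List.length_cons, List.length_nil] at h
              omega
            cases L with
            | nil => exact absurd rfl hL0
            | cons a L' => simp

end AmalgAux

open AmalgAux in
theorem translate_ssubset_consequences {G : Type*} [Group G]
    (A B Lam : Subgroup G) (hA : Lam < A) (hB : Lam < B) (hAB : Lam = A ⊓ B)
    (T T' : Set G)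
    (hT : IsRightTransversalOf Lam A T) (hT' : IsRightTransversalOf Lam B T')
    (hNF : HasUniqueNormalForms Lam T T')
    (X : Set G) (hX : X = amalgX Lam T T')
    (lam0 : G) (hlam0 : lam0 • X ⊂ X) :
    lam0 ∈ X ∧
    (∃ (l : List G) (mu : G), IsNormalWord T T' l ∧ mu ∈ Lam ∧ lam0 = l.prod * mu ∧
      (∃ x, l.head? = some x ∧ x ∈ T) ∧ (∃ y, l.getLast? = some y ∧ y ∈ T')) ∧
    ∀ g : G, ∃ N : ℕ, ∀ n ≥ N, lam0 ^ n * g ∈ X := by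
  subst hX
  have hLA : Lam ≤ A := hAB ▸ inf_le_left
  have hsub : ∀ x ∈ amalgX Lam T T', lam0 * x ∈ amalgX Lam T T' := by
    intro x hx
    have := hlam0.subset (Set.smul_mem_smul_set (a := lam0) hx)
    simpa [smul_eq_mul] using this
  -- an element whose unique normal form does not begin with a letter of T is not in X
  have hnotmem : ∀ (g : G) (l : List G) (lam : G), IsNormalWord T T' l → lam ∈ Lam →
      g = l.prod * lam → (∀ x, l.head? = some x → x ∉ T) → g ∉ amalgX Lam T T' := by
    intro g l lam hnl hlam hg hhead hmem
    obtain ⟨l₂, lam₂, hnl₂, hlam₂, hg₂, x, hx, hxT⟩ := hmem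
    obtain ⟨p, -, hu⟩ := hNF g
    have e1 : (l, lam) = p := hu (l, lam) ⟨hnl, hlam, hg⟩
    have e2 : (l₂, lam₂) = p := hu (l₂, lam₂) ⟨hnl₂, hlam₂, hg₂⟩
    have hll : l = l₂ := congrArg Prod.fst (e1.trans e2.symm)
    rw [← hll] at hx
    exact hhead x hx hxT
  -- X is invariant under left multiplication by Lam
  have hlmm : ∀ lam ∈ Lam, ∀ x ∈ amalgX Lam T T', lam * x ∈ amalgX Lam T T' := by
    intro lam hlam x hx
    obtain ⟨l, ν, hnl, hν, rfl, w, hw, hwT⟩ := hx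
    obtain ⟨l', lam', hlam', hpe, hnl', hf⟩ := push hAB hT hT' l hnl lam hlam
    obtain ⟨w', hw', hR⟩ := forall₂_head_some hf hw
    have hw1 : w ≠ 1 := (hnl.1 w (head_mem hw)).1
    exact ⟨l', lam' * ν, hnl', Lam.mul_mem hlam' hν,
      by rw [← mul_assoc, hpe, mul_assoc], w', hw',
      nrel_T hAB hT hT' hR hwT hw1⟩
  -- lam0 is not in Lam
  have h0L : lam0 ∉ Lam := by
    intro hm
    apply hlam0.ne
    apply Set.Subset.antisymm
    · rintro y ⟨x, hx, rfl⟩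
      simpa [smul_eq_mul] using hlmm lam0 hm x hx
    · intro y hy
      refine ⟨lam0⁻¹ * y, hlmm lam0⁻¹ (Lam.inv_mem hm) y hy, ?_⟩
      simp [smul_eq_mul]
  -- the normal form of lam0
  obtain ⟨⟨l₀, μ₀⟩, ⟨hnl₀, hμ₀, hprod₀⟩, -⟩ := hNF lam0
  rcases List.eq_nil_or_concat l₀ with rfl | ⟨L₀, u₀, rfl⟩
  · exact absurd (by rw [hprod₀]; simpa using hμ₀) h0L
  simp only [List.concat_eq_append] at hnl₀ hprod₀
  obtain ⟨hu₀1, hu₀TT⟩ := hnl₀.1 u₀ (by simp)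
  obtain ⟨v₀, hv₀⟩ : ∃ v, (L₀ ++ [u₀]).head? = some v := by
    cases L₀ with
    | nil => exact ⟨u₀, rfl⟩
    | cons a L => exact ⟨a, rfl⟩
  obtain ⟨hv₀1, hv₀TT⟩ := hnl₀.1 v₀ (head_mem hv₀)
  have hone : (1 : G) ∉ amalgX Lam T T' :=
    hnotmem 1 [] 1 nw_nil Lam.one_mem (by simp) (by simp)
  -- the last letter is in T'
  have hu₀T' : u₀ ∈ T' := by
    rcases hu₀TT with huT | huT'
    · exfalso
      obtain ⟨m, κ, hκ, hinv, hnm, hfm⟩ := inv_form hAB hT hT' (L₀ ++ [u₀]) hnl₀ μ₀ hμ₀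
      have hrh : (L₀ ++ [u₀]).reverse.head? = some u₀ := by
        rw [List.head?_reverse]; exact List.getLast?_concat (l := L₀)
      obtain ⟨w, hwm, hRw⟩ := forall₂_head_some hfm hrh
      have hinvX : lam0⁻¹ ∈ amalgX Lam T T' :=
        ⟨m, κ, hnm, hκ, by rw [hprod₀]; exact hinv, w, hwm,
          nrel_T hAB hT hT' hRw huT hu₀1⟩
      have h1X := hsub _ hinvX
      rw [mul_inv_cancel] at h1X
      exact hone h1X
    · exact huT'
  -- the first letter is in T
  have hv₀T : v₀ ∈ T := by
    rcases hv₀TT with hvT | hvT'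
    · exact hvT
    · exfalso
      obtain ⟨a, haA, haL⟩ := SetLike.exists_of_lt hA
      obtain ⟨th, νh, htT, hνhL, hrepa, htne⟩ := rep_exists hT haA
      have ht1 : th ≠ 1 := htne haL
      have htX : th ∈ amalgX Lam T T' :=
        ⟨[th], 1, ⟨by rintro y hy; rw [List.mem_singleton] at hy; exact hy ▸ ⟨ht1, Or.inl htT⟩,
          List.isChain_singleton th⟩, Lam.one_mem, by simp, th, rfl, htT⟩
      have hX2 := hsub th htX
      have hμt : μ₀ * th ∈ A := A.mul_mem (hLA hμ₀) (hT.1 htT)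
      have hμtnL : μ₀ * th ∉ Lam := fun h => (not_mem_Lam_of_mem_T hT htT ht1)
        (by simpa [mul_assoc] using Lam.mul_mem (Lam.inv_mem hμ₀) h)
      obtain ⟨s, ν, hsT, hνL', hreps, hsne⟩ := rep_exists hT hμt
      have hs1 : s ≠ 1 := hsne hμtnL
      refine hnotmem (lam0 * th) ((L₀ ++ [u₀]) ++ [s]) ν ?_ hνL' ?_ ?_ hX2
      · refine ⟨?_, ?_⟩
        · intro y hy
          rcases List.mem_append.mp hy with hy' | hy'
          · exact hnl₀.1 y hy'
          · rw [List.mem_singleton] at hy'; exact hy' ▸ ⟨hs1, Or.inl hsT⟩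
        · show List.IsChain _ _; rw [List.isChain_append]
          refine ⟨hnl₀.2, List.isChain_singleton s, ?_⟩
          intro w hw y hy
          rw [List.getLast?_concat] at hw
          simp only [List.head?_cons, Option.mem_def, Option.some_inj] at hw hy
          subst hw; subst hy
          exact Or.inr ⟨hu₀T', hsT⟩
      · rw [hprod₀, mul_assoc, hreps]
        simp [List.prod_append, mul_assoc]
      · intro x hx
        have hxv : x = v₀ := by
          have : ((L₀ ++ [u₀]) ++ [s]).head? = some v₀ := by
            cases L₀ with
            | nil => simpa using hv₀
            | cons a L => simpa using hv₀
          rw [this] at hx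
          exact (Option.some_inj.mp hx).symm
        subst hxv
        exact not_mem_T_of_mem_T' hAB hT hT' hvT' hv₀1
  -- powers of lam0 applied to X
  have hpowmem : ∀ (k : ℕ) (x : G), x ∈ amalgX Lam T T' → lam0 ^ k * x ∈ amalgX Lam T T' := by
    intro k
    induction k with
    | zero => intro x hx; simpa using hx
    | succ n ihn =>
      intro x hx
      rw [pow_succ, mul_assoc]
      exact ihn _ (hsub x hx)
  -- normal form of powers of lam0
  have hPOW : ∀ n : ℕ, ∃ (w : List G) (κ : G), κ ∈ Lam ∧ lam0 ^ (n + 1) = w.prod * κ ∧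
      IsNormalWord T T' w ∧ w.head? = some v₀ ∧ n + 1 ≤ w.length := by
    intro n
    induction n with
    | zero => exact ⟨L₀ ++ [u₀], μ₀, hμ₀, by simpa using hprod₀, hnl₀, hv₀, by simp⟩
    | succ n ihn =>
      obtain ⟨w, κ, hκ, hpow, hnw, hhead, hlenw⟩ := ihn
      obtain ⟨w', lamp, hlampL, hpe, hnw', hlenp⟩ :=
        concat_noclash hAB hT hT' hnl₀ hnw hμ₀ (by
          intro a ha b hb
          rw [List.getLast?_concat] at ha
          rw [hhead] at hb
          simp only [Option.mem_def, Option.some_inj] at ha hb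
          subst ha; subst hb
          exact Or.inr ⟨hu₀T', hv₀T⟩)
      refine ⟨(L₀ ++ [u₀]) ++ w', lamp * κ, Lam.mul_mem hlampL hκ, ?_, hnw', ?_, ?_⟩
      · rw [pow_succ', hpow, hprod₀, ← mul_assoc, ← mul_assoc, hpe, mul_assoc]
      · cases L₀ with
        | nil => simpa using hv₀
        | cons a L => simpa using hv₀
      · simp only [List.length_append, List.length_cons, List.length_nil] at hlenw hlenp ⊢
        omega
  refine ⟨⟨L₀ ++ [u₀], μ₀, hnl₀, hμ₀, hprod₀, v₀, hv₀, hv₀T⟩,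
    ⟨L₀ ++ [u₀], μ₀, hnl₀, hμ₀, hprod₀, ⟨v₀, hv₀, hv₀T⟩,
      ⟨u₀, List.getLast?_concat (l := L₀), hu₀T'⟩⟩, ?_⟩
  intro g
  obtain ⟨⟨mg, κg⟩, ⟨hnmg, hκg, hgp⟩, -⟩ := hNF g
  refine ⟨mg.length + 1, fun n hn => ?_⟩
  obtain ⟨w, κ, hκ, hpow, hnw, hhead, hlenw⟩ := hPOW mg.length
  have hNX : lam0 ^ (mg.length + 1) * g ∈ amalgX Lam T T' := by
    obtain ⟨l, mu, hmu, hprod, hnl, hheadl⟩ :=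
      red hAB hT hT' w.length w mg κ le_rfl hnw hnmg hκ
    refine ⟨l, mu * κg, hnl, Lam.mul_mem hmu hκg, ?_, v₀, ?_, hv₀T⟩
    · rw [hpow, hgp, ← mul_assoc, ← mul_assoc, hprod, mul_assoc]
    · have hlt : mg.length < w.length := lt_of_lt_of_le (Nat.lt_succ_self _) hlenw
      rw [hheadl hlt, hhead]
  have hsplit : lam0 ^ n * g = lam0 ^ (n - (mg.length + 1)) * (lam0 ^ (mg.length + 1) * g) := by
    rw [← mul_assoc, ← pow_add, Nat.sub_add_cancel hn]
  rw [hsplit]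
  exact hpowmem _ _ hNX
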